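/- (First derivative bound for the eigenvalue.) Let d ≥ 1. Let H : ℝ → Matrix (Fin d) (Fin d) ℂ be differentiable on [0,1] with each H(s) Hermitian, let Ψ : ℝ → EuclideanSpace ℂ (Fin d) be differentiable on [0,1] with ‖Ψ(s)‖ = 1, and let γ : ℝ → ℝ be differentiable on [0,1], such that H(s) Ψ(s) = γ(s) Ψ(s) for all s ∈ [0,1]. Then for every s ∈ [0,1], |γ'(s)| ≤ ‖H'(s)‖. -/

import Mathlib

/-- The continuous linear map on Euclidean space associated to a matrix;
its operator norm is the operator norm induced by the Euclidean norm. -/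
noncomputable def opCLM {d : ℕ} (A : Matrix (Fin d) (Fin d) ℂ) :
    EuclideanSpace ℂ (Fin d) →L[ℂ] EuclideanSpace ℂ (Fin d) :=
  Matrix.toEuclideanCLM (𝕜 := ℂ) A

/-- **First derivative bound for the eigenvalue.** -/
theorem eigenvalue_first_deriv_bound {d : ℕ} (hd : 1 ≤ d)
    (H H' : ℝ → Matrix (Fin d) (Fin d) ℂ)
    (hHd : ∀ s ∈ Set.Icc (0:ℝ) 1, HasDerivAt (fun t => opCLM (H t)) (opCLM (H' s)) s)
    (hherm : ∀ s ∈ Set.Icc (0:ℝ) 1, (H s).IsHermitian)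
    (Ψ Ψ' : ℝ → EuclideanSpace ℂ (Fin d))
    (hΨd : ∀ s ∈ Set.Icc (0:ℝ) 1, HasDerivAt Ψ (Ψ' s) s)
    (hΨnorm : ∀ s ∈ Set.Icc (0:ℝ) 1, ‖Ψ s‖ = 1)
    (γ γ' : ℝ → ℝ)
    (hγd : ∀ s ∈ Set.Icc (0:ℝ) 1, HasDerivAt γ (γ' s) s)
    (heig : ∀ s ∈ Set.Icc (0:ℝ) 1, opCLM (H s) (Ψ s) = (γ s : ℂ) • Ψ s) :
    ∀ s ∈ Set.Icc (0:ℝ) 1, |γ' s| ≤ ‖opCLM (H' s)‖ := by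
  intro s hs
  have hud : UniqueDiffWithinAt ℝ (Set.Icc (0:ℝ) 1) s := (uniqueDiffOn_Icc one_pos) s hs
  -- derivative of the norm-squared function is zero within the interval
  have hn : HasDerivAt (fun t => (inner ℂ (Ψ t) (Ψ t) : ℂ))
      (inner ℂ (Ψ s) (Ψ' s) + inner ℂ (Ψ' s) (Ψ s)) s :=
    (hΨd s hs).inner ℂ (hΨd s hs)
  have hnconst : HasDerivWithinAt (fun t => (inner ℂ (Ψ t) (Ψ t) : ℂ)) 0 (Set.Icc (0:ℝ) 1) s := by
    have : ∀ t ∈ Set.Icc (0:ℝ) 1, (inner ℂ (Ψ t) (Ψ t) : ℂ) = 1 := by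
      intro t ht
      rw [inner_self_eq_norm_sq_to_K, hΨnorm t ht]
      norm_num
    exact (hasDerivWithinAt_const s _ (1:ℂ)).congr this (this s hs)
  have hzero : (inner ℂ (Ψ s) (Ψ' s) + inner ℂ (Ψ' s) (Ψ s) : ℂ) = 0 := by
    have h1 := (hn.hasDerivWithinAt (s := Set.Icc (0:ℝ) 1)).derivWithin hud
    have h2 := hnconst.derivWithin hud
    rw [h1] at h2; exact h2
  -- derivative of the quadratic form
  have hA : HasDerivAt (fun t => opCLM (H t) (Ψ t))
      ((opCLM (H' s)) (Ψ s) + (opCLM (H s)) (Ψ' s)) s := by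
    set L := ContinuousLinearMap.restrictScalarsL ℂ (EuclideanSpace ℂ (Fin d))
      (EuclideanSpace ℂ (Fin d)) ℝ ℝ
    have hHd' : HasDerivAt (fun t => L (opCLM (H t))) (L (opCLM (H' s))) s :=
      L.hasFDerivAt.comp_hasDerivAt s (hHd s hs)
    have := hHd'.clm_apply (hΨd s hs)
    exact this
  have hf : HasDerivAt (fun t => (inner ℂ (Ψ t) (opCLM (H t) (Ψ t)) : ℂ))
      (inner ℂ (Ψ s) ((opCLM (H' s)) (Ψ s) + (opCLM (H s)) (Ψ' s))
        + inner ℂ (Ψ' s) (opCLM (H s) (Ψ s))) s :=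
    (hΨd s hs).inner ℂ hA
  -- the quadratic form equals γ on the interval
  have hfγ : ∀ t ∈ Set.Icc (0:ℝ) 1,
      (inner ℂ (Ψ t) (opCLM (H t) (Ψ t)) : ℂ) = (γ t : ℂ) := by
    intro t ht
    rw [heig t ht, inner_smul_right, inner_self_eq_norm_sq_to_K, hΨnorm t ht]
    norm_num
  have hγc : HasDerivAt (fun t => ((γ t : ℂ))) ((γ' s : ℂ)) s :=
    (hγd s hs).ofReal_comp
  have hγw : HasDerivWithinAt (fun t => (inner ℂ (Ψ t) (opCLM (H t) (Ψ t)) : ℂ))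
      ((γ' s : ℂ)) (Set.Icc (0:ℝ) 1) s :=
    (hγc.hasDerivWithinAt).congr hfγ (hfγ s hs)
  have hkey : (γ' s : ℂ)
      = inner ℂ (Ψ s) ((opCLM (H' s)) (Ψ s) + (opCLM (H s)) (Ψ' s))
        + inner ℂ (Ψ' s) (opCLM (H s) (Ψ s)) := by
    have h1 := (hf.hasDerivWithinAt (s := Set.Icc (0:ℝ) 1)).derivWithin hud
    have h2 := hγw.derivWithin hud
    rw [h1] at h2; exact h2.symm
  -- symmetry of H s
  have hsym := Matrix.isHermitian_iff_isSymmetric.mp (hherm s hs)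
  have hsymm : ∀ x y : EuclideanSpace ℂ (Fin d),
      (inner ℂ (x) (opCLM (H s) y) : ℂ) = inner ℂ (opCLM (H s) x) y := by
    intro x y
    have := hsym x y
    simp only [opCLM, ← Matrix.coe_toEuclideanCLM_eq_toEuclideanLin] at this ⊢
    exact this.symm
  have hmain : (γ' s : ℂ) = inner ℂ (Ψ s) ((opCLM (H' s)) (Ψ s)) := by
    rw [hkey, inner_add_right, hsymm, heig s hs, inner_smul_right, inner_smul_left,
      Complex.conj_ofReal]
    have : (γ s : ℂ) * inner ℂ (Ψ s) (Ψ' s) + (γ s : ℂ) * inner ℂ (Ψ' s) (Ψ s)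
        = (γ s : ℂ) * ((inner ℂ (Ψ s) (Ψ' s) + inner ℂ (Ψ' s) (Ψ s) : ℂ)) := by ring
    rw [add_assoc, this, hzero, mul_zero, add_zero]
  calc |γ' s| = ‖(γ' s : ℂ)‖ := by rw [Complex.norm_real, Real.norm_eq_abs]
    _ = ‖(inner ℂ (Ψ s) ((opCLM (H' s)) (Ψ s)) : ℂ)‖ := by rw [hmain]
    _ ≤ ‖Ψ s‖ * ‖(opCLM (H' s)) (Ψ s)‖ := norm_inner_le_norm _ _
    _ ≤ ‖Ψ s‖ * (‖opCLM (H' s)‖ * ‖Ψ s‖) :=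
        mul_le_mul_of_nonneg_left ((opCLM (H' s)).le_opNorm _) (norm_nonneg _)
    _ = ‖opCLM (H' s)‖ := by rw [hΨnorm s hs]; ring
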